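/- arXiv:1812.06360 — 2 statements merged into one kernel-verified Lean document; each statement's English description precedes it below -/
import Mathlib

section
/- Let N > 1 be a natural number, let a < b be real numbers, and let x : Fin N → ℝ satisfy a ≤ x j ≤ b for all j, with mean μ = (1/N)·∑_{j} x j. Model a sample of size m drawn without replacement by choosing a permutation σ of Fin N uniformly at random and forming the sample mean X̄_m = (1/m)·∑_{t=0}^{m-1} x (σ t). Then for every natural number m with 1 ≤ m ≤ N and every δ ∈ (0,1], the probability of the event X̄_m − μ ≥ −(b − a)·√(ρ_m · log(1/δ) / (2m)) is at least 1 − δ, where ρ_m = min{1 − (m−1)/N, (1 − m/N)(1 + 1/m)}. (This is the lower-tail counterpart, obtained by applying the upper-tail bound to −x.) -/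
lemma hoeff_scalar (p h : ℝ) (hp0 : 0 ≤ p) (hp1 : p ≤ 1) (hh : 0 ≤ h) :
    (1 - p) * Real.exp (-p * h) + p * Real.exp ((1 - p) * h) ≤ Real.exp (h ^ 2 / 8) := by
  set g : ℝ → ℝ := fun t => 1 - p + p * Real.exp t with hg
  have hgpos : ∀ t, 0 < g t := by
    intro t
    have h1 : 0 ≤ p * Real.exp t := by positivity
    have h2 : 0 ≤ 1 - p := by linarith
    rcases eq_or_lt_of_le hp0 with h0 | h0
    · simp only [hg]; rw [← h0]; norm_num
    · have := Real.exp_pos t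
      simp only [hg]; nlinarith
  set f : ℝ → ℝ := fun t => t ^ 2 / 8 + p * t - Real.log (g t) with hf
  set f' : ℝ → ℝ := fun t => t / 4 + p - p * Real.exp t / g t with hf'
  have hder : ∀ t, HasDerivAt f (f' t) t := by
    intro t
    have h1 : HasDerivAt g (p * Real.exp t) t := by
      exact ((Real.hasDerivAt_exp t).const_mul p).const_add (1 - p)
    have h2 : HasDerivAt (fun t => Real.log (g t)) (p * Real.exp t / g t) t :=
      h1.log (ne_of_gt (hgpos t))
    have h3 : HasDerivAt (fun t : ℝ => t ^ 2 / 8 + p * t) (t / 4 + p) t := by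
      have := ((hasDerivAt_pow 2 t).div_const 8).add ((hasDerivAt_id t).const_mul p)
      refine this.congr_deriv ?_
      norm_num; ring
    exact h3.sub h2
  have hder' : ∀ t, HasDerivAt f' (1 / 4 - p * Real.exp t * (1 - p) / (g t) ^ 2) t := by
    intro t
    have h1 : HasDerivAt g (p * Real.exp t) t := by
      exact ((Real.hasDerivAt_exp t).const_mul p).const_add (1 - p)
    have h2 : HasDerivAt (fun t => p * Real.exp t) (p * Real.exp t) t :=
      (Real.hasDerivAt_exp t).const_mul p
    have h3 : HasDerivAt (fun t => p * Real.exp t / g t)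
        ((p * Real.exp t * g t - p * Real.exp t * (p * Real.exp t)) / (g t) ^ 2) t :=
      h2.div h1 (ne_of_gt (hgpos t))
    have h4 : HasDerivAt (fun t : ℝ => t / 4 + p) (1 / 4) t := by
      have := ((hasDerivAt_id t).div_const 4).add_const p
      simpa using this
    have h5 := h4.sub h3
    refine h5.congr_deriv ?_
    have : g t ≠ 0 := ne_of_gt (hgpos t)
    have e : p * Real.exp t * (1 - p) = p * Real.exp t * g t - p * Real.exp t * (p * Real.exp t) := by
      simp only [hg]; ring
    rw [e]
  have hf'0 : f' 0 = 0 := by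
    simp [hf', hg]
  have hmono' : Monotone f' := by
    apply monotone_of_deriv_nonneg
    · exact fun t => (hder' t).differentiableAt
    · intro t
      rw [(hder' t).deriv]
      have hp2 : 0 ≤ 1 - p := by linarith
      have h1 : 0 ≤ (1 - p) * (p * Real.exp t) := by positivity
      have h3 : 0 < (g t) ^ 2 := pow_pos (hgpos t) 2
      have h2 : 4 * (p * Real.exp t * (1 - p)) ≤ (g t) ^ 2 := by
        have hsq : 0 ≤ (1 - p - p * Real.exp t) ^ 2 := sq_nonneg _
        have hgt : g t = 1 - p + p * Real.exp t := rfl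
        rw [hgt]
        nlinarith [hsq]
      have : p * Real.exp t * (1 - p) / (g t) ^ 2 ≤ 1 / 4 := by
        rw [div_le_div_iff₀ h3 (by norm_num)]
        linarith
      linarith
  have hfmono : MonotoneOn f (Set.Ici (0:ℝ)) := by
    apply monotoneOn_of_deriv_nonneg (convex_Ici 0)
    · exact Continuous.continuousOn
        (Differentiable.continuous (fun t => (hder t).differentiableAt))
    · intro t _
      exact (hder t).differentiableAt.differentiableWithinAt
    · intro t ht
      rw [(hder t).deriv]
      have : (0:ℝ) ≤ t := le_of_lt (by simpa using ht)
      calc (0:ℝ) = f' 0 := hf'0.symm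
        _ ≤ f' t := hmono' this
  have hf0 : f 0 = 0 := by simp [hf, hg]
  have hfh : 0 ≤ f h := by
    rw [← hf0]
    exact hfmono (by simp) (by simpa using hh) hh
  have key : Real.log (g h) ≤ h ^ 2 / 8 + p * h := by
    have := hfh
    simp only [hf] at this
    linarith
  have lhs_eq : (1 - p) * Real.exp (-p * h) + p * Real.exp ((1 - p) * h)
      = Real.exp (-p * h) * g h := by
    simp only [hg]
    rw [show (1 - p) * h = -p * h + h by ring, Real.exp_add]
    ring
  rw [lhs_eq]
  have : Real.exp (-p * h) * g h = Real.exp (-p * h + Real.log (g h)) := by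
    rw [Real.exp_add, Real.exp_log (hgpos h)]
  rw [this]
  apply Real.exp_le_exp.2
  linarith

lemma finset_hoeffding {ι : Type*} (S : Finset ι) (hS : S.Nonempty) (w : ι → ℝ) (α β : ℝ)
    (hw : ∀ i ∈ S, α ≤ w i ∧ w i ≤ β) (h0 : ∑ i ∈ S, w i = 0) :
    ∑ i ∈ S, Real.exp (w i) ≤ (S.card : ℝ) * Real.exp ((β - α) ^ 2 / 8) := by
  have hcard : (0:ℝ) < S.card := by exact_mod_cast Finset.card_pos.2 hS
  have hα : α ≤ 0 := by
    have h1 : S.card • α ≤ ∑ i ∈ S, w i := Finset.card_nsmul_le_sum S w α (fun i hi => (hw i hi).1)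
    rw [h0, nsmul_eq_mul] at h1
    nlinarith
  have hβ : 0 ≤ β := by
    have h1 : ∑ i ∈ S, w i ≤ S.card • β := Finset.sum_le_card_nsmul S w β (fun i hi => (hw i hi).2)
    rw [h0, nsmul_eq_mul] at h1
    nlinarith
  rcases eq_or_lt_of_le (le_trans hα hβ : α ≤ β) with heq | hlt
  · have hα0 : α = 0 := le_antisymm hα (heq ▸ hβ)
    have hw0 : ∀ i ∈ S, w i = 0 := fun i hi =>
      le_antisymm (by have := (hw i hi).2; rw [← heq, hα0] at this; exact this)
        (by have := (hw i hi).1; rw [hα0] at this; exact this)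
    calc ∑ i ∈ S, Real.exp (w i) = ∑ i ∈ S, 1 := by
          apply Finset.sum_congr rfl; intro i hi; rw [hw0 i hi, Real.exp_zero]
      _ = (S.card : ℝ) := by simp
      _ ≤ (S.card : ℝ) * Real.exp ((β - α) ^ 2 / 8) := by
          nlinarith [Real.one_le_exp (by positivity : (0:ℝ) ≤ (β - α) ^ 2 / 8)]
  · have hba : (0:ℝ) < β - α := by linarith
    have hconv : ∀ i ∈ S, Real.exp (w i)
        ≤ ((β - w i) * Real.exp α + (w i - α) * Real.exp β) / (β - α) := by
      intro i hi
      obtain ⟨h1, h2⟩ := hw i hi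
      set θ : ℝ := (w i - α) / (β - α) with hθ
      have hθ0 : 0 ≤ θ := div_nonneg (by linarith) hba.le
      have hθ1 : θ ≤ 1 := (div_le_one hba).2 (by linarith)
      have hkey := convexOn_exp.2 (Set.mem_univ α) (Set.mem_univ β)
        (by linarith : (0:ℝ) ≤ 1 - θ) hθ0 (by ring)
      simp only [smul_eq_mul] at hkey
      have harg : (1 - θ) * α + θ * β = w i := by
        rw [hθ]
        field_simp
        ring
      rw [harg] at hkey
      have hrhs : (1 - θ) * Real.exp α + θ * Real.exp β
          = ((β - w i) * Real.exp α + (w i - α) * Real.exp β) / (β - α) := by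
        rw [eq_div_iff (ne_of_gt hba), hθ]
        field_simp
        ring
      linarith [hkey, hrhs.le, hrhs.ge]
    have hsum : ∑ i ∈ S, (((β - w i) * Real.exp α + (w i - α) * Real.exp β) / (β - α))
        = (S.card : ℝ) * ((β * Real.exp α - α * Real.exp β) / (β - α)) := by
      rw [← Finset.sum_div]
      have hterm : ∀ i ∈ S, (β - w i) * Real.exp α + (w i - α) * Real.exp β
          = (β * Real.exp α - α * Real.exp β) + w i * (Real.exp β - Real.exp α) := by
        intro i _; ring
      rw [Finset.sum_congr rfl hterm, Finset.sum_add_distrib, ← Finset.sum_mul, h0,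
        Finset.sum_const, nsmul_eq_mul]
      ring
    have hmid : (β * Real.exp α - α * Real.exp β) / (β - α) ≤ Real.exp ((β - α) ^ 2 / 8) := by
      set p : ℝ := -α / (β - α) with hp
      have hp0 : 0 ≤ p := div_nonneg (by linarith) hba.le
      have hp1 : p ≤ 1 := (div_le_one hba).2 (by linarith)
      have key := hoeff_scalar p (β - α) hp0 hp1 hba.le
      have e1 : -p * (β - α) = α := by rw [hp]; field_simp
      have e2 : (1 - p) * (β - α) = β := by rw [hp]; field_simp; ring
      rw [e1, e2] at key
      have e3 : (1 - p) * Real.exp α + p * Real.exp β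
          = (β * Real.exp α - α * Real.exp β) / (β - α) := by
        rw [eq_div_iff (ne_of_gt hba), hp]
        field_simp
        ring
      linarith [e3.ge, e3.le]
    calc ∑ i ∈ S, Real.exp (w i)
        ≤ ∑ i ∈ S, (((β - w i) * Real.exp α + (w i - α) * Real.exp β) / (β - α)) :=
          Finset.sum_le_sum hconv
      _ = (S.card : ℝ) * ((β * Real.exp α - α * Real.exp β) / (β - α)) := hsum
      _ ≤ (S.card : ℝ) * Real.exp ((β - α) ^ 2 / 8) := by
          apply mul_le_mul_of_nonneg_left hmid hcard.le

noncomputable def sM (N : ℕ) (x : Fin N → ℝ) (k : ℕ) (σ : Equiv.Perm (Fin N)) : ℝ :=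
  ∑ t ∈ Finset.univ.filter (fun t : Fin N => (t : ℕ) < k), x (σ t)

noncomputable def Mart (N : ℕ) (x : Fin N → ℝ) (k : ℕ) (σ : Equiv.Perm (Fin N)) : ℝ :=
  (sM N x k σ - k * ((∑ j, x j) / N)) / ((N : ℝ) - k)

lemma perm_step (N : ℕ) (k : Fin N) (g h : Equiv.Perm (Fin N) → ℝ) (C : ℝ)
    (hstep : ∀ σ : Equiv.Perm (Fin N),
      ∑ t ∈ Finset.Ici k, Real.exp (h (σ * Equiv.swap k t))
        ≤ ((Finset.Ici k).card : ℝ) * (Real.exp C * Real.exp (g σ))) :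
    ∑ σ : Equiv.Perm (Fin N), Real.exp (h σ)
      ≤ Real.exp C * ∑ σ : Equiv.Perm (Fin N), Real.exp (g σ) := by
  have hcard : (0:ℝ) < ((Finset.Ici k).card : ℝ) := by
    have : k ∈ Finset.Ici k := Finset.mem_Ici.2 le_rfl
    exact_mod_cast Finset.card_pos.2 ⟨k, this⟩
  have hmain : ((Finset.Ici k).card : ℝ) * ∑ σ : Equiv.Perm (Fin N), Real.exp (h σ)
      ≤ ((Finset.Ici k).card : ℝ) *
        (Real.exp C * ∑ σ : Equiv.Perm (Fin N), Real.exp (g σ)) := by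
    have hre : ∀ t : Fin N, ∑ σ : Equiv.Perm (Fin N), Real.exp (h σ)
        = ∑ σ : Equiv.Perm (Fin N), Real.exp (h (σ * Equiv.swap k t)) := by
      intro t
      exact (Fintype.sum_equiv (Equiv.mulRight (Equiv.swap k t)) _ _ (fun σ => rfl)).symm
    calc ((Finset.Ici k).card : ℝ) * ∑ σ : Equiv.Perm (Fin N), Real.exp (h σ)
        = ∑ t ∈ Finset.Ici k, ∑ σ : Equiv.Perm (Fin N), Real.exp (h (σ * Equiv.swap k t)) := by
          rw [Finset.sum_congr rfl (fun t _ => (hre t).symm), Finset.sum_const, nsmul_eq_mul]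
      _ = ∑ σ : Equiv.Perm (Fin N), ∑ t ∈ Finset.Ici k, Real.exp (h (σ * Equiv.swap k t)) :=
          Finset.sum_comm
      _ ≤ ∑ σ : Equiv.Perm (Fin N), ((Finset.Ici k).card : ℝ) * (Real.exp C * Real.exp (g σ)) :=
          Finset.sum_le_sum (fun σ _ => hstep σ)
      _ = ((Finset.Ici k).card : ℝ) * (Real.exp C * ∑ σ : Equiv.Perm (Fin N), Real.exp (g σ)) := by
          rw [← Finset.mul_sum, ← Finset.mul_sum]
  exact le_of_mul_le_mul_left hmain hcard

lemma mgf_bound (N : ℕ) (x : Fin N → ℝ) (a b : ℝ) (hx : ∀ j, a ≤ x j ∧ x j ≤ b)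
    (γ : ℝ) (hγ : 0 ≤ γ) (K : ℕ) (hKN : K < N) :
    ∑ σ : Equiv.Perm (Fin N), Real.exp (γ * Mart N x K σ)
      ≤ (Nat.factorial N : ℝ) *
        Real.exp (γ ^ 2 * (b - a) ^ 2 / 8 * ∑ k ∈ Finset.range K, (1 / ((N:ℝ) - k - 1)) ^ 2) := by
  induction K with
  | zero =>
    have h0 : ∀ σ : Equiv.Perm (Fin N), γ * Mart N x 0 σ = 0 := by
      intro σ; simp [Mart, sM]
    rw [Finset.sum_congr rfl (fun σ _ => by rw [h0 σ, Real.exp_zero])]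
    simp [Finset.card_univ, Fintype.card_perm]
  | succ K ih =>
    have hKN' : K < N := by omega
    have ihK := ih hKN'
    -- real number facts
    have hNr : ((K:ℝ) + 1) < N := by exact_mod_cast hKN
    have hd : (0:ℝ) < (N:ℝ) - K - 1 := by linarith
    have hNK : (0:ℝ) < (N:ℝ) - K := by linarith
    have hN0 : (0:ℝ) < (N:ℝ) := by linarith [Nat.cast_nonneg (α := ℝ) K]
    set X : ℝ := ∑ j, x j with hX
    set C : ℝ := γ ^ 2 * (b - a) ^ 2 / 8 * (1 / ((N:ℝ) - K - 1)) ^ 2 with hC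
    set kF : Fin N := ⟨K, hKN'⟩ with hkF
    have hstep : ∀ σ : Equiv.Perm (Fin N),
        ∑ t ∈ Finset.Ici kF, Real.exp ((fun σ => γ * Mart N x (K+1) σ) (σ * Equiv.swap kF t))
          ≤ ((Finset.Ici kF).card : ℝ) *
            (Real.exp C * Real.exp ((fun σ => γ * Mart N x K σ) σ)) := by
      intro σ
      simp only
      set P : ℝ := sM N x K σ with hP
      set MK : ℝ := Mart N x K σ with hMK
      set w : Fin N → ℝ :=
        fun t => γ * Mart N x (K+1) (σ * Equiv.swap kF t) - γ * MK with hw_def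
      set E : ℝ := γ * (P - ((K:ℝ)+1) * (X / N)) / ((N:ℝ) - K - 1) - γ * MK with hE
      -- key evaluation of sM after the swap
      have hF1 : ∀ t ∈ Finset.Ici kF, sM N x (K+1) (σ * Equiv.swap kF t) = P + x (σ t) := by
        intro t ht
        have htK : K ≤ (t:ℕ) := by
          have h := Finset.mem_Ici.1 ht
          rw [Fin.le_def] at h
          simpa [hkF] using h
        have hset : Finset.univ.filter (fun i : Fin N => (i:ℕ) < K+1)
            = insert kF (Finset.univ.filter (fun i : Fin N => (i:ℕ) < K)) := by
          ext i
          simp only [Finset.mem_filter, Finset.mem_univ, true_and, Finset.mem_insert]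
          constructor
          · intro hi
            rcases Nat.lt_succ_iff_lt_or_eq.1 hi with h | h
            · exact Or.inr h
            · exact Or.inl (Fin.ext h)
          · rintro (rfl | h)
            · simp [hkF]
            · omega
        have hnot : kF ∉ Finset.univ.filter (fun i : Fin N => (i:ℕ) < K) := by
          simp [hkF]
        rw [sM, hset, Finset.sum_insert hnot]
        have h1 : (σ * Equiv.swap kF t) kF = σ t := by
          rw [Equiv.Perm.mul_apply, Equiv.swap_apply_left]
        have h2 : ∀ i ∈ Finset.univ.filter (fun i : Fin N => (i:ℕ) < K),
            x ((σ * Equiv.swap kF t) i) = x (σ i) := by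
          intro i hi
          have hiK : (i:ℕ) < K := (Finset.mem_filter.1 hi).2
          have hne1 : i ≠ kF := by
            intro h; rw [h] at hiK; simp [hkF] at hiK
          have hne2 : i ≠ t := by
            intro h; rw [h] at hiK; omega
          rw [Equiv.Perm.mul_apply, Equiv.swap_apply_of_ne_of_ne hne1 hne2]
        rw [h1, Finset.sum_congr rfl h2, hP, sM]
        ring
      -- formula for w on the relevant set
      have hw_formula : ∀ t ∈ Finset.Ici kF, w t = γ / ((N:ℝ) - K - 1) * x (σ t) + E := by
        intro t ht
        have hF := hF1 t ht
        have hden : (N:ℝ) - ((K:ℕ)+1 : ℕ) ≠ 0 := by push_cast; linarith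
        simp only [hw_def, hE]
        rw [Mart, hF]
        push_cast
        ring
      -- bounds
      set α : ℝ := γ / ((N:ℝ) - K - 1) * a + E with hα
      set β : ℝ := γ / ((N:ℝ) - K - 1) * b + E with hβ
      have hwb : ∀ t ∈ Finset.Ici kF, α ≤ w t ∧ w t ≤ β := by
        intro t ht
        rw [hw_formula t ht, hα, hβ]
        have h1 := (hx (σ t)).1
        have h2 := (hx (σ t)).2
        have hgd : 0 ≤ γ / ((N:ℝ) - K - 1) := div_nonneg hγ hd.le
        constructor
        · have := mul_le_mul_of_nonneg_left h1 hgd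
          linarith
        · have := mul_le_mul_of_nonneg_left h2 hgd
          linarith
      -- cardinality
      have hcardT : ((Finset.Ici kF).card : ℝ) = (N:ℝ) - K := by
        have h1 : (Finset.Ici kF).card = N - K := by simpa [hkF] using Fin.card_Ici kF
        rw [h1, Nat.cast_sub hKN'.le]
      -- sum of x over the tail
      have hsplit := Finset.sum_filter_add_sum_filter_not Finset.univ
        (fun t : Fin N => (t:ℕ) < K) (fun t => x (σ t))
      have hTeq : Finset.univ.filter (fun t : Fin N => ¬ (t:ℕ) < K) = Finset.Ici kF := by
        ext t
        simp only [Finset.mem_filter, Finset.mem_univ, true_and, Finset.mem_Ici]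
        rw [Fin.le_def]
        simp only [hkF]
        omega
      have huniv : ∑ t : Fin N, x (σ t) = X := by
        rw [hX]; exact Equiv.sum_comp σ x
      have hsumT : ∑ t ∈ Finset.Ici kF, x (σ t) = X - P := by
        rw [← hTeq]
        have : ∑ t ∈ Finset.univ.filter (fun t : Fin N => (t:ℕ) < K), x (σ t) = P := rfl
        linarith [hsplit, huniv, this]
      -- mean zero
      have hMK_eq : MK = (P - (K:ℝ) * (X / N)) / ((N:ℝ) - K) := by
        rw [hMK, Mart, ← hP, ← hX]
      have h0 : ∑ t ∈ Finset.Ici kF, w t = 0 := by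
        rw [Finset.sum_congr rfl hw_formula, Finset.sum_add_distrib, ← Finset.mul_sum,
          hsumT, Finset.sum_const, nsmul_eq_mul, hcardT, hE, hMK_eq]
        have e1 : ((N:ℝ) - K - 1) ≠ 0 := by linarith
        have e2 : ((N:ℝ) - K) ≠ 0 := by linarith
        have e3 : (N:ℝ) ≠ 0 := by linarith
        field_simp [e1, e2, e3]
        ring
      -- apply hoeffding
      have hne : (Finset.Ici kF).Nonempty := ⟨kF, Finset.mem_Ici.2 le_rfl⟩
      have hhoeff := finset_hoeffding (Finset.Ici kF) hne w α β hwb h0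
      have hCeq : (β - α) ^ 2 / 8 = C := by
        rw [hα, hβ, hC]
        ring
      rw [hCeq] at hhoeff
      calc ∑ t ∈ Finset.Ici kF, Real.exp (γ * Mart N x (K+1) (σ * Equiv.swap kF t))
          = ∑ t ∈ Finset.Ici kF, Real.exp (w t) * Real.exp (γ * MK) := by
            apply Finset.sum_congr rfl
            intro t _
            rw [← Real.exp_add]
            congr 1
            simp only [hw_def]
            ring
        _ = (∑ t ∈ Finset.Ici kF, Real.exp (w t)) * Real.exp (γ * MK) := by
            rw [Finset.sum_mul]
        _ ≤ (((Finset.Ici kF).card : ℝ) * Real.exp C) * Real.exp (γ * MK) := by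
            apply mul_le_mul_of_nonneg_right hhoeff (Real.exp_nonneg _)
        _ = ((Finset.Ici kF).card : ℝ) * (Real.exp C * Real.exp (γ * MK)) := by ring
    have hchain := perm_step N kF (fun σ => γ * Mart N x K σ)
      (fun σ => γ * Mart N x (K+1) σ) C hstep
    calc ∑ σ : Equiv.Perm (Fin N), Real.exp (γ * Mart N x (K+1) σ)
        ≤ Real.exp C * ∑ σ : Equiv.Perm (Fin N), Real.exp (γ * Mart N x K σ) := hchain
      _ ≤ Real.exp C * ((Nat.factorial N : ℝ) *
          Real.exp (γ ^ 2 * (b - a) ^ 2 / 8 * ∑ k ∈ Finset.range K, (1 / ((N:ℝ) - k - 1)) ^ 2)) :=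
          mul_le_mul_of_nonneg_left ihK (Real.exp_nonneg _)
      _ = (Nat.factorial N : ℝ) *
          Real.exp (γ ^ 2 * (b - a) ^ 2 / 8 *
            ∑ k ∈ Finset.range (K+1), (1 / ((N:ℝ) - k - 1)) ^ 2) := by
          rw [Finset.sum_range_succ, mul_add, Real.exp_add, hC]
          push_cast
          ring

lemma telescope_sum (N K : ℕ) :
    ∑ k ∈ Finset.range K, (1 / ((N:ℝ) - k - 1) - 1 / ((N:ℝ) - k))
      = 1 / ((N:ℝ) - K) - 1 / N := by
  calc ∑ k ∈ Finset.range K, (1 / ((N:ℝ) - k - 1) - 1 / ((N:ℝ) - k))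
      = ∑ k ∈ Finset.range K, (1 / ((N:ℝ) - (k+1:ℕ)) - 1 / ((N:ℝ) - k)) := by
        apply Finset.sum_congr rfl
        intro k _
        push_cast
        ring_nf
    _ = 1 / ((N:ℝ) - K) - 1 / ((N:ℝ) - (0:ℕ)) :=
        Finset.sum_range_sub (f := fun k : ℕ => 1 / ((N:ℝ) - k)) K
    _ = 1 / ((N:ℝ) - K) - 1 / N := by norm_num

lemma serfling_sum (N m : ℕ) (hm1 : 1 ≤ m) (hmN : m < N) :
    ((N:ℝ) - m) ^ 2 * ∑ k ∈ Finset.range m, (1 / ((N:ℝ) - k - 1)) ^ 2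
      ≤ m * ((N:ℝ) - m + 1) / N := by
  have hNr : (m:ℝ) < N := by exact_mod_cast hmN
  have hterm : ∀ k ∈ Finset.range m,
      ((N:ℝ) - m) ^ 2 * (1 / ((N:ℝ) - k - 1)) ^ 2
        ≤ ((N:ℝ) - m) * ((N:ℝ) - m + 1) * (1 / ((N:ℝ) - k - 1) - 1 / ((N:ℝ) - k)) := by
    intro k hk
    have hkm : k < m := Finset.mem_range.1 hk
    have hkr : (k:ℝ) + 1 ≤ m := by exact_mod_cast hkm
    have h1 : (0:ℝ) < (N:ℝ) - k - 1 := by linarith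
    have h2 : (0:ℝ) < (N:ℝ) - k := by linarith
    have h3 : (0:ℝ) < (N:ℝ) - m := by linarith
    have hdiff : 1 / ((N:ℝ) - k - 1) - 1 / ((N:ℝ) - k)
        = 1 / (((N:ℝ) - k - 1) * ((N:ℝ) - k)) := by
      field_simp
      ring
    rw [hdiff, div_pow, one_pow, mul_one_div, mul_one_div,
      div_le_div_iff₀ (by positivity) (by positivity)]
    have hkey : ((N:ℝ) - m) * ((N:ℝ) - k) ≤ ((N:ℝ) - m + 1) * ((N:ℝ) - k - 1) := by nlinarith
    have hu : (0:ℝ) ≤ ((N:ℝ) - m) * ((N:ℝ) - k - 1) := by positivity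
    nlinarith [mul_le_mul_of_nonneg_left hkey hu]
  calc ((N:ℝ) - m) ^ 2 * ∑ k ∈ Finset.range m, (1 / ((N:ℝ) - k - 1)) ^ 2
      = ∑ k ∈ Finset.range m, ((N:ℝ) - m) ^ 2 * (1 / ((N:ℝ) - k - 1)) ^ 2 := Finset.mul_sum _ _ _
    _ ≤ ∑ k ∈ Finset.range m, ((N:ℝ) - m) * ((N:ℝ) - m + 1) * (1 / ((N:ℝ) - k - 1) - 1 / ((N:ℝ) - k)) :=
        Finset.sum_le_sum hterm
    _ = ((N:ℝ) - m) * ((N:ℝ) - m + 1) * (1 / ((N:ℝ) - m) - 1 / N) := by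
        rw [← Finset.mul_sum, telescope_sum]
    _ = m * ((N:ℝ) - m + 1) / N := by
        have h3 : (0:ℝ) < (N:ℝ) - m := by linarith
        have hN0 : (0:ℝ) < (N:ℝ) := by linarith [Nat.cast_nonneg (α := ℝ) m]
        field_simp
        ring

lemma bm_sum (N m : ℕ) (hm1 : 1 ≤ m) (hmN : m < N) :
    ∑ k ∈ Finset.range (N - m), (1 / ((N:ℝ) - k - 1)) ^ 2
      ≤ (1 + 1 / (m:ℝ)) * (1 / m - 1 / N) := by
  have hNr : (m:ℝ) < N := by exact_mod_cast hmN
  have hm0 : (0:ℝ) < m := by exact_mod_cast hm1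
  have hterm : ∀ k ∈ Finset.range (N - m),
      (1 / ((N:ℝ) - k - 1)) ^ 2
        ≤ (1 + 1 / (m:ℝ)) * (1 / ((N:ℝ) - k - 1) - 1 / ((N:ℝ) - k)) := by
    intro k hk
    have hkm : k < N - m := Finset.mem_range.1 hk
    have hkr : (k:ℝ) + m ≤ (N:ℝ) - 1 := by
      have : k + m ≤ N - 1 := by omega
      have h2 := (Nat.cast_le (α := ℝ)).2 this
      push_cast [Nat.cast_sub (by omega : 1 ≤ N)] at h2
      linarith
    have h1 : (0:ℝ) < (N:ℝ) - k - 1 := by linarith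
    have h2 : (0:ℝ) < (N:ℝ) - k := by linarith
    have hdiff : 1 / ((N:ℝ) - k - 1) - 1 / ((N:ℝ) - k)
        = 1 / (((N:ℝ) - k - 1) * ((N:ℝ) - k)) := by
      field_simp
      ring
    have hRHS : (1 + 1 / (m:ℝ)) * (1 / (((N:ℝ) - k - 1) * ((N:ℝ) - k)))
        = ((m:ℝ) + 1) / ((m:ℝ) * (((N:ℝ) - k - 1) * ((N:ℝ) - k))) := by
      field_simp
    rw [hdiff, hRHS, div_pow, one_pow,
      div_le_div_iff₀ (by positivity) (by positivity)]
    have hkey : (m:ℝ) * ((N:ℝ) - k) ≤ ((m:ℝ) + 1) * ((N:ℝ) - k - 1) := by nlinarith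
    nlinarith [mul_le_mul_of_nonneg_left hkey h1.le]
  calc ∑ k ∈ Finset.range (N - m), (1 / ((N:ℝ) - k - 1)) ^ 2
      ≤ ∑ k ∈ Finset.range (N - m), (1 + 1 / (m:ℝ)) * (1 / ((N:ℝ) - k - 1) - 1 / ((N:ℝ) - k)) :=
        Finset.sum_le_sum hterm
    _ = (1 + 1 / (m:ℝ)) * (1 / ((N:ℝ) - (N - m : ℕ)) - 1 / N) := by
        rw [← Finset.mul_sum, telescope_sum]
    _ = (1 + 1 / (m:ℝ)) * (1 / m - 1 / N) := by
        rw [Nat.cast_sub hmN.le]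
        ring_nf

set_option maxHeartbeats 1600000 in
/-- Lower-tail counterpart of the without-replacement concentration bound:
`X̄_m − μ ≥ −(b − a)·√(ρ_m · log(1/δ) / (2m))` with probability at least `1 − δ`. -/
theorem stmt1 (N : ℕ) (hN : 1 < N) (a b : ℝ) (hab : a < b)
    (x : Fin N → ℝ) (hx : ∀ j, a ≤ x j ∧ x j ≤ b)
    (m : ℕ) (hm1 : 1 ≤ m) (hmN : m ≤ N)
    (δ : ℝ) (hδ0 : 0 < δ) (hδ1 : δ ≤ 1) :
    1 - δ ≤
      (Nat.card {σ : Equiv.Perm (Fin N) //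
          -((b - a) * Real.sqrt
              ((min (1 - ((m : ℝ) - 1) / N) ((1 - (m : ℝ) / N) * (1 + 1 / (m : ℝ)))
                * Real.log (1 / δ)) / (2 * m)))
            ≤ (1 / (m : ℝ)) * (∑ t ∈ Finset.univ.filter (fun t : Fin N => (t : ℕ) < m), x (σ t))
              - (1 / (N : ℝ)) * ∑ j, x j} : ℝ)
        / (Nat.card (Equiv.Perm (Fin N)) : ℝ) := by
  classical
  set ρ : ℝ := min (1 - ((m:ℝ)-1)/N) ((1 - (m:ℝ)/N)*(1 + 1/(m:ℝ))) with hρ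
  set ε : ℝ := (b - a) * Real.sqrt ((ρ * Real.log (1/δ)) / (2*m)) with hε
  set X : ℝ := ∑ j, x j with hX
  set P : Equiv.Perm (Fin N) → Prop := fun σ =>
    -ε ≤ (1/(m:ℝ)) * (∑ t ∈ Finset.univ.filter (fun t : Fin N => (t : ℕ) < m), x (σ t))
      - (1/(N:ℝ)) * X with hP
  -- basic positivity
  have hm0 : (0:ℝ) < m := by exact_mod_cast hm1
  have hN0 : (0:ℝ) < N := by exact_mod_cast Nat.zero_lt_of_lt hN
  have hba : (0:ℝ) < b - a := by linarith
  have hε0 : 0 ≤ ε := mul_nonneg hba.le (Real.sqrt_nonneg _)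
  have hfac0 : (0:ℝ) < (Nat.factorial N : ℝ) := by exact_mod_cast Nat.factorial_pos N
  -- reduce to counting the bad set
  have hcard1 : (Nat.card {σ : Equiv.Perm (Fin N) // P σ} : ℝ)
      = ((Finset.univ.filter P).card : ℝ) := by
    norm_cast
    simp [Nat.card_eq_fintype_card, Fintype.card_subtype]
  have hcard2 : (Nat.card (Equiv.Perm (Fin N)) : ℝ) = (Nat.factorial N : ℝ) := by
    norm_cast
    simp [Nat.card_eq_fintype_card, Fintype.card_perm]
  rw [hcard1, hcard2, le_div_iff₀ hfac0]
  have hsplitc := Finset.card_filter_add_card_filter_not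
    (s := (Finset.univ : Finset (Equiv.Perm (Fin N)))) (p := P)
  rw [Finset.card_univ, Fintype.card_perm, Fintype.card_fin] at hsplitc
  suffices hbad : ((Finset.univ.filter (fun σ => ¬ P σ)).card : ℝ) ≤ δ * (Nat.factorial N : ℝ) by
    have : ((Finset.univ.filter P).card : ℝ)
        + ((Finset.univ.filter (fun σ => ¬ P σ)).card : ℝ) = (Nat.factorial N : ℝ) := by
      exact_mod_cast congrArg (Nat.cast (R := ℝ)) hsplitc
    nlinarith
  -- trivial case m = N
  rcases eq_or_lt_of_le hmN with hmeq | hmlt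
  · have hall : ∀ σ : Equiv.Perm (Fin N), P σ := by
      intro σ
      have hfull : Finset.univ.filter (fun t : Fin N => (t : ℕ) < m) = Finset.univ := by
        ext t; simp; omega
      have hXeq : ∑ t ∈ Finset.univ.filter (fun t : Fin N => (t : ℕ) < m), x (σ t) = X := by
        rw [hfull, hX]; exact Equiv.sum_comp σ x
      show -ε ≤ (1/(m:ℝ)) * (∑ t ∈ Finset.univ.filter (fun t : Fin N => (t : ℕ) < m), x (σ t))
        - (1/(N:ℝ)) * X
      rw [hXeq, hmeq]
      have : (1/(N:ℝ)) * X - (1/(N:ℝ)) * X = 0 := by ring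
      rw [this]
      linarith
    have : Finset.univ.filter (fun σ : Equiv.Perm (Fin N) => ¬ P σ) = ∅ := by
      apply Finset.filter_eq_empty_iff.2
      intro σ _
      simp [hall σ]
    rw [this]
    simp
    positivity
  -- main case m < N
  have hNr : (m:ℝ) < N := by exact_mod_cast hmlt
  have hρ1 : (0:ℝ) < 1 - ((m:ℝ)-1)/N := by
    rw [sub_pos, div_lt_one hN0]; linarith
  have hρ2 : (0:ℝ) < (1 - (m:ℝ)/N)*(1 + 1/(m:ℝ)) := by
    have h1 : (0:ℝ) < 1 - (m:ℝ)/N := by rw [sub_pos, div_lt_one hN0]; linarith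
    have h2 : (0:ℝ) < 1 + 1/(m:ℝ) := by positivity
    positivity
  have hρpos : 0 < ρ := lt_min hρ1 hρ2
  have hL0 : 0 ≤ Real.log (1/δ) := Real.log_nonneg (by rw [le_div_iff₀ hδ0]; linarith)
  have harg : 0 ≤ (ρ * Real.log (1/δ)) / (2*m) := by positivity
  have hε2 : ε^2 = (b-a)^2 * ((ρ * Real.log (1/δ)) / (2*m)) := by
    rw [hε, mul_pow, Real.sq_sqrt harg]
  set lam : ℝ := 4*m*ε/((b-a)^2*ρ) with hlam
  have hlam0 : 0 ≤ lam := by positivity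
  set Y : Equiv.Perm (Fin N) → ℝ := fun σ => X/(N:ℝ) - (sM N x m σ)/(m:ℝ) with hY
  -- combined MGF bound
  have hmgf : ∑ σ : Equiv.Perm (Fin N), Real.exp (lam * Y σ)
      ≤ (Nat.factorial N : ℝ) * Real.exp (lam^2*(b-a)^2*ρ/(8*m)) := by
    rcases le_total (1 - ((m:ℝ)-1)/N) ((1 - (m:ℝ)/N)*(1 + 1/(m:ℝ))) with hc | hc
    · -- Serfling side
      have hρeq : ρ = 1 - ((m:ℝ)-1)/N := min_eq_left hc
      have hx' : ∀ j, -b ≤ -x j ∧ -x j ≤ -a := fun j => ⟨by linarith [(hx j).2], by linarith [(hx j).1]⟩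
      set γ1 : ℝ := lam * ((N:ℝ) - m) / m with hγ1
      have hγ10 : 0 ≤ γ1 := by
        apply div_nonneg (mul_nonneg hlam0 (by linarith)) hm0.le
      have hbound := mgf_bound N (fun j => -x j) (-b) (-a) hx' γ1 hγ10 m hmlt
      have hpt : ∀ σ : Equiv.Perm (Fin N), γ1 * Mart N (fun j => -x j) m σ = lam * Y σ := by
        intro σ
        have hsm : sM N (fun j => -x j) m σ = - sM N x m σ := by
          rw [sM, sM, ← Finset.sum_neg_distrib]
        have hsx : ∑ j, (fun j => -x j) j = -X := by
          rw [hX, ← Finset.sum_neg_distrib]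
        rw [Mart, hsm, hsx, hγ1, hY]
        simp only
        have hNm : (N:ℝ) - m ≠ 0 := by linarith
        field_simp
        ring
      have hgeq : ∑ σ : Equiv.Perm (Fin N), Real.exp (lam * Y σ)
          = ∑ σ : Equiv.Perm (Fin N), Real.exp (γ1 * Mart N (fun j => -x j) m σ) :=
        Finset.sum_congr rfl (fun σ _ => by rw [hpt σ])
      rw [hgeq]
      refine le_trans hbound ?_
      apply mul_le_mul_of_nonneg_left _ hfac0.le
      apply Real.exp_le_exp.2
      have hss := serfling_sum N m hm1 hmlt
      have hcoef : (0:ℝ) ≤ lam^2*(b-a)^2/(8*m^2) := by positivity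
      have h1 : γ1 ^ 2 * ((-a) - (-b)) ^ 2 / 8 * ∑ k ∈ Finset.range m, (1 / ((N:ℝ) - k - 1)) ^ 2
          = lam^2*(b-a)^2/(8*m^2) *
            (((N:ℝ) - m) ^ 2 * ∑ k ∈ Finset.range m, (1 / ((N:ℝ) - k - 1)) ^ 2) := by
        rw [hγ1]; ring
      have h2 : lam^2*(b-a)^2/(8*m^2) * ((m:ℝ) * ((N:ℝ) - m + 1) / N)
          = lam^2*(b-a)^2*ρ/(8*m) := by
        rw [hρeq]
        field_simp
        ring
      rw [h1, ← h2]
      exact mul_le_mul_of_nonneg_left hss hcoef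
    · -- Bardenet–Maillard side
      have hρeq : ρ = (1 - (m:ℝ)/N)*(1 + 1/(m:ℝ)) := min_eq_right hc
      have hbound := mgf_bound N x a b hx lam hlam0 (N - m) (by omega)
      have hYM : ∀ τ : Equiv.Perm (Fin N), Y (τ * Fin.revPerm) = Mart N x (N - m) τ := by
        intro τ
        have hkey : sM N x m (τ * Fin.revPerm) = X - sM N x (N - m) τ := by
          have h1 : sM N x m (τ * Fin.revPerm)
              = ∑ t ∈ Finset.univ.filter (fun u : Fin N => ¬ ((u : ℕ) < N - m)), x (τ t) := by
            rw [sM]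
            refine Finset.sum_equiv (Fin.revPerm : Equiv.Perm (Fin N)) ?_ ?_
            · intro t
              simp only [Finset.mem_filter, Finset.mem_univ, true_and, Fin.revPerm_apply,
                Fin.val_rev]
              omega
            · intro t _
              rfl
          rw [h1]
          have h2 := Finset.sum_filter_add_sum_filter_not Finset.univ
            (fun u : Fin N => (u : ℕ) < N - m) (fun u => x (τ u))
          have h3 : ∑ u : Fin N, x (τ u) = X := by rw [hX]; exact Equiv.sum_comp τ x
          have h4 : ∑ u ∈ Finset.univ.filter (fun u : Fin N => (u : ℕ) < N - m), x (τ u)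
              = sM N x (N - m) τ := rfl
          linarith [h2, h3, h4]
        show X/(N:ℝ) - (sM N x m (τ * Fin.revPerm))/(m:ℝ) = Mart N x (N - m) τ
        rw [hkey, Mart]
        have hcast : ((N - m : ℕ) : ℝ) = (N:ℝ) - m := by
          rw [Nat.cast_sub hmN]
        rw [hcast]
        have hNm : (N:ℝ) - ((N:ℝ) - m) = m := by ring
        rw [hNm]
        field_simp
        ring
      have hrev : ∑ σ : Equiv.Perm (Fin N), Real.exp (lam * Mart N x (N - m) σ)
          = ∑ σ : Equiv.Perm (Fin N), Real.exp (lam * Y σ) :=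
        Fintype.sum_equiv (Equiv.mulRight (Fin.revPerm)) _ _
          (fun τ => by rw [Equiv.coe_mulRight, ← hYM τ])
      rw [hrev] at hbound
      refine le_trans hbound ?_
      apply mul_le_mul_of_nonneg_left _ hfac0.le
      apply Real.exp_le_exp.2
      have hss := bm_sum N m hm1 hmlt
      have hcoef : (0:ℝ) ≤ lam^2*(b-a)^2/8 := by positivity
      have h2 : lam^2*(b-a)^2/8 * ((1 + 1/(m:ℝ)) * (1/m - 1/N))
          = lam^2*(b-a)^2*ρ/(8*m) := by
        rw [hρeq]
        field_simp
      rw [← h2]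
      exact mul_le_mul_of_nonneg_left hss hcoef
  -- Chernoff counting
  set B : Finset (Equiv.Perm (Fin N)) := Finset.univ.filter (fun σ => ¬ P σ) with hB
  have hYbad : ∀ σ ∈ B, Real.exp (lam * ε) ≤ Real.exp (lam * Y σ) := by
    intro σ hσ
    have hσ' : ¬ P σ := (Finset.mem_filter.1 hσ).2
    rw [hP] at hσ'
    simp only [not_le] at hσ'
    have hYσ : ε ≤ Y σ := by
      show ε ≤ X/(N:ℝ) - (sM N x m σ)/(m:ℝ)
      have hsM : sM N x m σ
          = ∑ t ∈ Finset.univ.filter (fun t : Fin N => (t : ℕ) < m), x (σ t) := rfl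
      have h5 : (1/(m:ℝ)) * (sM N x m σ) - (1/(N:ℝ)) * X < -ε := by
        rw [hsM]; exact hσ'
      have h6 : X/(N:ℝ) - (sM N x m σ)/(m:ℝ)
          = -((1/(m:ℝ)) * (sM N x m σ) - (1/(N:ℝ)) * X) := by ring
      linarith
    exact Real.exp_le_exp.2 (mul_le_mul_of_nonneg_left hYσ hlam0)
  have hchern : (B.card : ℝ) * Real.exp (lam * ε)
      ≤ ∑ σ : Equiv.Perm (Fin N), Real.exp (lam * Y σ) := by
    calc (B.card : ℝ) * Real.exp (lam * ε) = B.card • Real.exp (lam * ε) := by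
          rw [nsmul_eq_mul]
      _ ≤ ∑ σ ∈ B, Real.exp (lam * Y σ) := Finset.card_nsmul_le_sum B _ _ hYbad
      _ ≤ ∑ σ : Equiv.Perm (Fin N), Real.exp (lam * Y σ) :=
          Finset.sum_le_sum_of_subset_of_nonneg (Finset.subset_univ B)
            (fun σ _ _ => (Real.exp_pos _).le)
  have hexp : lam^2*(b-a)^2*ρ/(8*m) - lam * ε = Real.log δ := by
    have hstep1 : lam^2*(b-a)^2*ρ/(8*m) - lam * ε = -(2*m*ε^2)/((b-a)^2*ρ) := by
      rw [hlam]
      field_simp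
      ring
    rw [hstep1, hε2]
    have : -(2*(m:ℝ)*((b-a)^2 * ((ρ * Real.log (1/δ)) / (2*m))))/((b-a)^2*ρ)
        = - Real.log (1/δ) := by
      field_simp
    rw [this, one_div, Real.log_inv]
    ring
  have hfinal : (B.card : ℝ) ≤ δ * (Nat.factorial N : ℝ) := by
    have he : (0:ℝ) < Real.exp (lam * ε) := Real.exp_pos _
    have h1 : (B.card : ℝ) * Real.exp (lam * ε)
        ≤ (Nat.factorial N : ℝ) * Real.exp (lam^2*(b-a)^2*ρ/(8*m)) := le_trans hchern hmgf
    have h2 : (B.card : ℝ) ≤ (Nat.factorial N : ℝ)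
        * Real.exp (lam^2*(b-a)^2*ρ/(8*m)) / Real.exp (lam * ε) := by
      rw [le_div_iff₀ he]; exact h1
    have h3 : (Nat.factorial N : ℝ) * Real.exp (lam^2*(b-a)^2*ρ/(8*m)) / Real.exp (lam * ε)
        = (Nat.factorial N : ℝ) * Real.exp (lam^2*(b-a)^2*ρ/(8*m) - lam * ε) := by
      rw [Real.exp_sub]; ring
    rw [h3, hexp, Real.exp_log hδ0] at h2
    linarith
  exact hfinal
end

section
/- Let N be a natural number with N > 1 and let u > 0 be a real number. For every natural number m with 1 ≤ m < N, if m ≥ min{(u + 1)/(1 + u/N), (u + u/N)/(1 + u/N)}, then m / ρ_m ≥ u, where ρ_m = min{1 − (m − 1)/N, (1 − m/N)(1 + 1/m)}. -/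
/-- Combining both branches: for integers `1 ≤ m < N`, if
`m ≥ min{(u+1)/(1+u/N), (u+u/N)/(1+u/N)}` then `m/ρ_m ≥ u`, where
`ρ_m = min{1 − (m−1)/N, (1 − m/N)(1 + 1/m)}`. -/
theorem stmt6 (N : ℕ) (hN : 1 < N) (u : ℝ) (hu : 0 < u)
    (m : ℕ) (hm1 : 1 ≤ m) (hmN : m < N)
    (h : min ((u + 1) / (1 + u / (N : ℝ))) ((u + u / (N : ℝ)) / (1 + u / (N : ℝ))) ≤ (m : ℝ)) :
    u ≤ (m : ℝ) /
      min (1 - ((m : ℝ) - 1) / N) ((1 - (m : ℝ) / N) * (1 + 1 / (m : ℝ))) := by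
  have hN' : (1:ℝ) < N := by exact_mod_cast hN
  have hm' : (1:ℝ) ≤ m := by exact_mod_cast hm1
  have hmN' : (m:ℝ) + 1 ≤ N := by exact_mod_cast hmN
  have hN0 : (0:ℝ) < N := by linarith
  have hm0 : (0:ℝ) < m := by linarith
  set ρ1 : ℝ := 1 - ((m:ℝ) - 1) / N with hρ1def
  set ρ2 : ℝ := (1 - (m:ℝ) / N) * (1 + 1 / (m:ℝ)) with hρ2def
  have hρ1 : 0 < ρ1 := by
    rw [hρ1def, sub_pos, div_lt_one hN0]; linarith
  have hρ2 : 0 < ρ2 := by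
    apply mul_pos
    · rw [sub_pos, div_lt_one hN0]; linarith
    · positivity
  have hmin : 0 < min ρ1 ρ2 := lt_min hρ1 hρ2
  have hden : (0:ℝ) < 1 + u / N := by positivity
  rw [le_div_iff₀ hmin]
  rcases min_le_iff.mp h with h1 | h2
  · -- threshold 1 ≤ m : use ρ2
    have key : u * N + N ≤ m * N + m * u := by
      rw [div_le_iff₀ hden] at h1
      have := mul_le_mul_of_nonneg_right h1 (le_of_lt hN0)
      have hNne : (N:ℝ) ≠ 0 := ne_of_gt hN0
      field_simp at this
      linarith
    have e : ρ2 * (N * m) = ((N:ℝ) - m) * (m + 1) := by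
      rw [hρ2def]; field_simp
    have step : u * ((N:ℝ) - m) ≤ N * (m - 1) := by nlinarith
    have step2 : u * ((N:ℝ) - m) * (m + 1) ≤ N * (m - 1) * (m + 1) :=
      mul_le_mul_of_nonneg_right step (by linarith)
    have hmain : u * ρ2 ≤ m := by
      rw [← mul_le_mul_iff_of_pos_right (mul_pos hN0 hm0)]
      calc u * ρ2 * (N * m) = u * (ρ2 * (N * m)) := by ring
        _ = u * (((N:ℝ) - m) * (m + 1)) := by rw [e]
        _ ≤ N * (m - 1) * (m + 1) := by linarith [step2]
        _ ≤ m * (N * m) := by nlinarith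
    calc u * min ρ1 ρ2 ≤ u * ρ2 :=
          mul_le_mul_of_nonneg_left (min_le_right _ _) (le_of_lt hu)
      _ ≤ m := hmain
  · -- threshold 2 ≤ m : use ρ1
    have key : u * N + u ≤ m * N + m * u := by
      rw [div_le_iff₀ hden] at h2
      have := mul_le_mul_of_nonneg_right h2 (le_of_lt hN0)
      have hNne : (N:ℝ) ≠ 0 := ne_of_gt hN0
      field_simp at this
      linarith
    have hmain : u * ρ1 ≤ m := by
      rw [← mul_le_mul_iff_of_pos_right hN0]
      have e : ρ1 * N = (N:ℝ) - m + 1 := by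
        rw [hρ1def]; field_simp; ring
      calc u * ρ1 * N = u * (ρ1 * N) := by ring
        _ = u * ((N:ℝ) - m + 1) := by rw [e]
        _ ≤ m * N := by nlinarith
    calc u * min ρ1 ρ2 ≤ u * ρ1 :=
          mul_le_mul_of_nonneg_left (min_le_left _ _) (le_of_lt hu)
      _ ≤ m := hmain
end
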